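/- Let Ω ⊂ ℝ³ be a bounded strictly convex C² domain whose boundary has positive Gaussian curvature. There exists a constant C > 0, depending only on Ω, such that for every interior point x ∈ Ω, ∫_{∂Ω} |x - y|^{-2} dA(y) ≤ C(|ln d(x,∂Ω)| + 1), where dA is the surface measure on ∂Ω. -/

import Mathlib

set_option linter.unusedSectionVars false
set_option linter.unusedVariables false

open MeasureTheory
open scoped MeasureTheory

open Metric Set
open scoped RealInnerProductSpace ENNReal NNReal


variable {F : Type*} [NormedAddCommGroup F] [InnerProductSpace ℝ F] [CompleteSpace F]

lemma exists_proj_point {K : Set F} (hK : Convex ℝ K) (hcl : IsClosed K) (hne : K.Nonempty)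
    (u : F) : ∃ v ∈ K, ∀ w ∈ K, ⟪u - v, w - v⟫ ≤ 0 := by
  obtain ⟨v, hv, hmin⟩ := exists_norm_eq_iInf_of_complete_convex hne hcl.isComplete hK u
  exact ⟨v, hv, (norm_eq_iInf_iff_real_inner_le_zero hK hv).1 hmin⟩

lemma proj_point_unique {K : Set F} {q p z : F} (hq : q ∈ K) (hp : p ∈ K)
    (h1 : ∀ w ∈ K, ⟪z - q, w - q⟫ ≤ 0) (h2 : ∀ w ∈ K, ⟪z - p, w - p⟫ ≤ 0) : p = q := by
  have a := h1 p hp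
  have b := h2 q hq
  have key : ⟪p - q, p - q⟫ ≤ 0 := by
    have h3 : ⟪p - q, p - q⟫ = ⟪z - q, p - q⟫ + ⟪z - p, q - p⟫ := by
      simp only [inner_sub_left, inner_sub_right]
      ring_nf
    linarith
  exact sub_eq_zero.1 (real_inner_self_nonpos.1 key)

/-- 1-Lipschitz property of metric projections. -/
lemma proj_point_dist_le {K : Set F} {p q u v : F} (hp : p ∈ K) (hq : q ∈ K)
    (h1 : ∀ w ∈ K, ⟪u - p, w - p⟫ ≤ 0) (h2 : ∀ w ∈ K, ⟪v - q, w - q⟫ ≤ 0) :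
    dist p q ≤ dist u v := by
  have a := h1 q hq
  have b := h2 p hp
  have key : ‖p - q‖ ^ 2 ≤ ⟪u - v, p - q⟫ := by
    have h3 : ⟪p - q, p - q⟫ = ⟪u - v, p - q⟫ + ⟪v - q, p - q⟫ + ⟪u - p, q - p⟫ := by
      simp only [inner_sub_left, inner_sub_right]
      ring_nf
    rw [← real_inner_self_eq_norm_sq]
    linarith
  have h4 : ⟪u - v, p - q⟫ ≤ ‖u - v‖ * ‖p - q‖ := real_inner_le_norm _ _
  have h5 : (0:ℝ) ≤ ‖p - q‖ := norm_nonneg _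
  have h6 : (0:ℝ) ≤ ‖u - v‖ := norm_nonneg _
  rw [dist_eq_norm, dist_eq_norm]
  nlinarith



lemma exists_ray_sphere {x a ν : F} (hν : ‖ν‖ = 1) {r ρ : ℝ} (ha : dist a x ≤ r)
    (hρ : r < ρ) (hr : 0 ≤ r) : ∃ t : ℝ, 0 ≤ t ∧ dist (a + t • ν) x = ρ := by
  set b : ℝ := ⟪a - x, ν⟫ with hb
  set c : ℝ := ‖a - x‖ with hc
  have hc' : c ≤ r := by rwa [hc, ← dist_eq_norm]
  have hc0 : (0:ℝ) ≤ c := norm_nonneg _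
  have hnn : 0 ≤ b ^ 2 + ρ ^ 2 - c ^ 2 := by nlinarith [sq_nonneg b, hc0, hc', hρ, hr]
  set s : ℝ := Real.sqrt (b ^ 2 + ρ ^ 2 - c ^ 2) with hs
  have hs2 : s ^ 2 = b ^ 2 + ρ ^ 2 - c ^ 2 := Real.sq_sqrt hnn
  have hsb : b ≤ s := by
    have : |b| ≤ s := by
      rw [hs, ← Real.sqrt_sq_eq_abs]
      exact Real.sqrt_le_sqrt (by nlinarith [hc0, hc', hρ, hr])
    exact (le_abs_self b).trans this
  have hexp0 : 0 ≤ s - b := by linarith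
  refine ⟨s - b, hexp0, ?_⟩
  have hexp : dist (a + (s - b) • ν) x ^ 2 = ρ ^ 2 := by
    rw [dist_eq_norm]
    have h1 : a + (s - b) • ν - x = (a - x) + (s - b) • ν := by abel
    rw [h1, norm_add_sq_real, inner_smul_right, norm_smul, ← hb, ← hc]
    simp only [Real.norm_eq_abs, hν, mul_one]
    have : |s - b| ^ 2 = (s - b) ^ 2 := sq_abs _
    nlinarith [hs2]
  have h0 : (0:ℝ) ≤ ρ := by linarith
  nlinarith [dist_nonneg (x := a + (s - b) • ν) (y := x)]

lemma proj_fixed {K : Set F} {q : F} (hq : q ∈ K) {P : F → F} (hPmem : ∀ u, P u ∈ K)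
    (hPvar : ∀ u, ∀ w ∈ K, ⟪u - P u, w - P u⟫ ≤ 0) : P q = q := by
  have h1 : ∀ w ∈ K, ⟪q - q, w - q⟫ ≤ 0 := by intro w hw; simp
  exact proj_point_unique hq (hPmem q) h1 (hPvar q)

lemma frontier_subset_proj_image [FiniteDimensional ℝ F] {K : Set F} {x : F} {r : ℝ} (hr : 0 < r) (hx : x ∈ K)
    (hKb : K ⊆ closedBall x r) (hcl : IsClosed K) {P : F → F} (hPmem : ∀ u, P u ∈ K)
    (hPvar : ∀ u, ∀ w ∈ K, ⟪u - P u, w - P u⟫ ≤ 0) :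
    frontier K ⊆ P '' (sphere x (2 * r)) := by
  have hPlip : LipschitzWith 1 P := by
    apply LipschitzWith.of_dist_le_mul
    intro u v
    rw [NNReal.coe_one, one_mul]
    exact proj_point_dist_le (hPmem u) (hPmem v) (hPvar u) (hPvar v)
  have himcl : IsClosed (P '' (sphere x (2 * r))) :=
    ((isCompact_sphere x (2 * r)).image hPlip.continuous).isClosed
  intro q hq
  have hqK : q ∈ K := hcl.frontier_subset hq
  have hqc : q ∈ closure Kᶜ := by
    rw [frontier_eq_closure_inter_closure] at hq; exact hq.2
  obtain ⟨u, hu, hulim⟩ := mem_closure_iff_seq_limit.1 hqc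
  -- for each n, P (u n) ∈ P '' sphere
  have key : ∀ n, P (u n) ∈ P '' (sphere x (2 * r)) := by
    intro n
    set p := P (u n) with hp
    have hpK : p ∈ K := hPmem (u n)
    have hne : u n - p ≠ 0 := by
      intro h
      exact hu n (by rw [sub_eq_zero] at h; rw [h]; exact hpK)
    set ν : F := ‖u n - p‖⁻¹ • (u n - p) with hν
    have hνn : ‖ν‖ = 1 := norm_smul_inv_norm hne
    obtain ⟨t, ht0, htmem⟩ := exists_ray_sphere (x := x) (a := p) (ρ := 2*r) hνn
      (hKb hpK) (by linarith) hr.le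
    refine ⟨p + t • ν, htmem, ?_⟩
    apply proj_point_unique (K := K) hpK (hPmem _) ?_ (hPvar _)
    intro w hw
    have h2 : p + t • ν - p = (t * ‖u n - p‖⁻¹) • (u n - p) := by
      rw [hν, smul_smul]; abel
    have h3 : ⟪p + t • ν - p, w - p⟫ = (t * ‖u n - p‖⁻¹) * ⟪u n - p, w - p⟫ := by
      rw [h2, real_inner_smul_left]
    rw [h3]
    have h4 : ⟪u n - p, w - p⟫ ≤ 0 := hPvar (u n) w hw
    have h5 : 0 ≤ t * ‖u n - p‖⁻¹ := by positivity
    exact mul_nonpos_of_nonneg_of_nonpos h5 h4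
  -- P (u n) → q
  have hPq : P q = q := proj_fixed hqK hPmem hPvar
  have hlim : Filter.Tendsto (fun n => P (u n)) Filter.atTop (nhds q) := by
    have := hPlip.continuous.continuousAt (x := q)
    have := ((hPlip.continuous.tendsto q).comp hulim)
    rwa [hPq] at this
  exact himcl.mem_of_tendsto hlim (Filter.Eventually.of_forall key)


noncomputable section

abbrev E3 := EuclideanSpace ℝ (Fin 3)
abbrev E2 := EuclideanSpace ℝ (Fin 2)

/-- The norm-squared of a Euclidean vector as a coordinate sum. -/
lemma normsq_eq3 (w : E3) : ‖w‖^2 = ∑ m : Fin 3, (w m)^2 := by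
  rw [EuclideanSpace.norm_eq, Real.sq_sqrt (by positivity)]
  simp [Real.norm_eq_abs, sq_abs]

lemma normsq_eq2 (w : E2) : ‖w‖^2 = ∑ m : Fin 2, (w m)^2 := by
  rw [EuclideanSpace.norm_eq, Real.sq_sqrt (by positivity)]
  simp [Real.norm_eq_abs, sq_abs]

lemma sqrt_diff_sq_le {A B m : ℝ} (hA : m ≤ A) (hB : m ≤ B) (hm : 0 < m) :
    (Real.sqrt A - Real.sqrt B)^2 * (2*m) ≤ (A - B)^2 := by
  have hA0 : 0 ≤ A := le_trans hm.le hA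
  have hB0 : 0 ≤ B := le_trans hm.le hB
  have ha : Real.sqrt A ^ 2 = A := Real.sq_sqrt hA0
  have hb : Real.sqrt B ^ 2 = B := Real.sq_sqrt hB0
  have key : ((Real.sqrt A - Real.sqrt B) * (Real.sqrt A + Real.sqrt B))^2 = (A - B)^2 := by
    rw [mul_pow]; nlinarith [ha, hb]
  have hab : 2*m ≤ (Real.sqrt A + Real.sqrt B)^2 := by
    nlinarith [mul_nonneg (Real.sqrt_nonneg A) (Real.sqrt_nonneg B)]
  calc (Real.sqrt A - Real.sqrt B)^2 * (2*m)
      ≤ (Real.sqrt A - Real.sqrt B)^2 * (Real.sqrt A + Real.sqrt B)^2 :=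
        mul_le_mul_of_nonneg_left hab (sq_nonneg _)
    _ = (A - B)^2 := by rw [← mul_pow]; exact key

lemma ennreal_coe_rpow_two (c : ℝ≥0) : ((c:ℝ≥0∞))^(2:ℝ) = (c:ℝ≥0∞) * c := by
  rw [show (2:ℝ) = ((2:ℕ):ℝ) by norm_num, ENNReal.rpow_natCast]
  ring

lemma dom_measure_le {ρ : ℝ} (hρ : 0 < ρ) :
    μH[2] {u : E2 | 3 * ‖u‖^2 ≤ 2 * ρ^2} ≤ ENNReal.ofReal (16 * ρ^2) := by
  set ι : (Fin 2 → ℝ) → E2 := fun u => (WithLp.equiv 2 (Fin 2 → ℝ)).symm u with hι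
  have hιapp : ∀ (u : Fin 2 → ℝ) (l : Fin 2), ι u l = u l := fun u l => rfl
  have hlip : LipschitzWith 2 ι := by
    apply LipschitzWith.of_dist_le_mul
    intro u v
    have h1 : dist (ι u) (ι v) ^ 2 = (u 0 - v 0)^2 + (u 1 - v 1)^2 := by
      rw [dist_eq_norm, normsq_eq2, Fin.sum_univ_two]
      simp [PiLp.sub_apply, hιapp]
    have h2 : ∀ l, (u l - v l)^2 ≤ dist u v^2 := by
      intro l
      have hd := dist_le_pi_dist u v l
      rw [Real.dist_eq] at hd
      nlinarith [dist_nonneg (x := u) (y := v), abs_nonneg (u l - v l), sq_abs (u l - v l)]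
    have h3 : dist (ι u) (ι v)^2 ≤ 4 * dist u v^2 := by
      have := h2 0; have := h2 1
      rw [h1]; nlinarith [dist_nonneg (x := u) (y := v)]
    have hd0 : (0:ℝ) ≤ dist (ι u) (ι v) := dist_nonneg
    have hd1 : (0:ℝ) ≤ dist u v := dist_nonneg
    have : dist (ι u) (ι v) ≤ 2 * dist u v := by nlinarith
    simpa using this
  set S : Set (Fin 2 → ℝ) := {u | 3 * ((u 0)^2 + (u 1)^2) ≤ 2*ρ^2} with hS
  have himg : {u : E2 | 3 * ‖u‖^2 ≤ 2 * ρ^2} ⊆ ι '' S := by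
    intro u hu
    refine ⟨(WithLp.equiv 2 (Fin 2 → ℝ)) u, ?_, ?_⟩
    · have : ‖u‖^2 = (u 0)^2 + (u 1)^2 := by rw [normsq_eq2, Fin.sum_univ_two]
      simpa [hS, this] using hu
    · exact (WithLp.equiv 2 (Fin 2 → ℝ)).symm_apply_apply u
  have hSsq : S ⊆ Set.pi univ (fun _ : Fin 2 => Icc (-ρ) ρ) := by
    intro u hu l _
    have h0 : (0:ℝ) ≤ (u 0)^2 := sq_nonneg _
    have h1 : (0:ℝ) ≤ (u 1)^2 := sq_nonneg _
    have hul : (u l)^2 ≤ ρ^2 := by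
      have hu' : 3 * ((u 0)^2 + (u 1)^2) ≤ 2*ρ^2 := hu
      fin_cases l <;> simp <;> nlinarith
    constructor
    · nlinarith [sq_nonneg (u l + ρ)]
    · nlinarith [sq_nonneg (u l - ρ)]
  have hpi : (μH[(2:ℝ)] : Measure (Fin 2 → ℝ)) = volume := by
    simpa using MeasureTheory.hausdorffMeasure_pi_real (ι := Fin 2)
  calc μH[2] {u : E2 | 3 * ‖u‖^2 ≤ 2 * ρ^2} ≤ μH[2] (ι '' S) := measure_mono himg
    _ ≤ (2:ℝ≥0)^(2:ℝ) * μH[2] S := hlip.hausdorffMeasure_image_le (by norm_num) S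
    _ ≤ (2:ℝ≥0)^(2:ℝ) * volume (Set.pi univ (fun _ : Fin 2 => Icc (-ρ) ρ)) := by
        rw [hpi]; exact mul_le_mul_right (measure_mono hSsq) _
    _ = ENNReal.ofReal (16 * ρ^2) := by
        rw [volume_pi_pi]
        simp only [Real.volume_Icc, Finset.prod_const, Finset.card_univ, Fintype.card_fin]
        have h1 : (ENNReal.ofReal (ρ - -ρ))^2 = ENNReal.ofReal (4*ρ^2) := by
          rw [sq, ← ENNReal.ofReal_mul (by linarith)]; congr 1; ring
        rw [h1, ennreal_coe_rpow_two]
        rw [show ((2:ℝ≥0):ℝ≥0∞) * (2:ℝ≥0) = ENNReal.ofReal 4 by norm_num,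
          ← ENNReal.ofReal_mul (by norm_num)]
        congr 1; ring

set_option maxHeartbeats 1000000 in
/-- Measure bound for a spherical cap, via a graph parametrization. -/
lemma cap_measure_le (x : E3) {ρ : ℝ} (hρ : 0 < ρ) (i : Fin 3) (ε : ℝ) (hε : ε = 1 ∨ ε = -1) :
    μH[2] {z : E3 | dist z x = ρ ∧ ρ^2 ≤ 3 * (z i - x i)^2 ∧ 0 ≤ ε * (z i - x i)} ≤
      ENNReal.ofReal (144 * ρ^2) := by
  have hε2 : ε^2 = 1 := by rcases hε with h | h <;> rw [h] <;> norm_num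
  set Dom : Set E2 := {u : E2 | 3 * ‖u‖^2 ≤ 2 * ρ^2} with hDom
  set φ : E2 → E3 := fun u =>
    x + (ε * Real.sqrt (ρ^2 - ‖u‖^2)) • EuclideanSpace.single i 1
      + ∑ l : Fin 2, u l • EuclideanSpace.single (i.succAbove l) 1 with hφ
  -- coordinates of φ
  have hφcoord : ∀ u : E2, ∀ m : Fin 3,
      φ u m = x m + (ε * Real.sqrt (ρ^2 - ‖u‖^2)) * (if m = i then 1 else 0)
        + ∑ l : Fin 2, u l * (if m = i.succAbove l then 1 else 0) := by
    intro u m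
    rw [hφ]
    simp only [PiLp.add_apply, PiLp.smul_apply, EuclideanSpace.single_apply, smul_eq_mul,
      Fin.sum_univ_two, mul_ite, mul_one, mul_zero]
  have hφi : ∀ u : E2, φ u i = x i + ε * Real.sqrt (ρ^2 - ‖u‖^2) := by
    intro u
    rw [hφcoord u i]
    simp [Fin.ne_succAbove]
  have hφσ : ∀ u : E2, ∀ l : Fin 2, φ u (i.succAbove l) = x (i.succAbove l) + u l := by
    intro u l
    rw [hφcoord u (i.succAbove l)]
    rw [if_neg (Fin.succAbove_ne i l)]
    simp [Fin.succAbove_right_inj, Finset.sum_ite_eq]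
  -- squared distance formula
  have hdist2 : ∀ u v : E2, dist (φ u) (φ v) ^ 2 =
      (ε * (Real.sqrt (ρ^2 - ‖u‖^2) - Real.sqrt (ρ^2 - ‖v‖^2)))^2
        + ((u 0 - v 0)^2 + (u 1 - v 1)^2) := by
    intro u v
    rw [dist_eq_norm, normsq_eq3, Fin.sum_univ_succAbove _ i]
    simp only [PiLp.sub_apply, hφi, hφσ, Fin.sum_univ_two]
    ring
  have hnorm2 : ∀ u v : E2, ‖u - v‖^2 = (u 0 - v 0)^2 + (u 1 - v 1)^2 := by
    intro u v
    rw [normsq_eq2, Fin.sum_univ_two]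
    simp [PiLp.sub_apply]
  -- Lipschitz bound on Dom
  have hlip : LipschitzOnWith 3 φ Dom := by
    rw [lipschitzOnWith_iff_dist_le_mul]
    intro u hu v hv
    have hu' : 3 * ‖u‖^2 ≤ 2 * ρ^2 := hu
    have hv' : 3 * ‖v‖^2 ≤ 2 * ρ^2 := hv
    set A := ρ^2 - ‖u‖^2 with hA
    set B := ρ^2 - ‖v‖^2 with hB
    have hm : 0 < ρ^2/3 := by positivity
    have hAm : ρ^2/3 ≤ A := by rw [hA]; nlinarith
    have hBm : ρ^2/3 ≤ B := by rw [hB]; nlinarith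
    have h1 : (Real.sqrt A - Real.sqrt B)^2 * (2*(ρ^2/3)) ≤ (A - B)^2 :=
      sqrt_diff_sq_le hAm hBm hm
    have ht : (‖u‖ - ‖v‖)^2 ≤ ‖u - v‖^2 := by
      have h := abs_norm_sub_norm_le u v
      have := abs_nonneg (‖u‖ - ‖v‖)
      nlinarith [sq_abs (‖u‖ - ‖v‖)]
    have hsumsq : (‖u‖ + ‖v‖)^2 ≤ 8/3 * ρ^2 := by
      nlinarith [norm_nonneg u, norm_nonneg v, sq_nonneg (‖u‖ - ‖v‖)]
    have h2 : (A - B)^2 ≤ 8/3 * ρ^2 * ‖u - v‖^2 := by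
      have hprod := mul_le_mul ht hsumsq (sq_nonneg _) (sq_nonneg _)
      have he : (A - B)^2 = (‖u‖ - ‖v‖)^2 * (‖u‖ + ‖v‖)^2 := by
        rw [hA, hB]; ring
      rw [he]; linarith [hprod]
    have h3 : (Real.sqrt A - Real.sqrt B)^2 ≤ 4 * ‖u - v‖^2 := by
      have hρ2 : 0 < ρ^2 := by positivity
      generalize hZ : (A - B)^2 = Z at h1 h2
      generalize hX : (Real.sqrt A - Real.sqrt B)^2 = X at h1 ⊢
      generalize hY : ‖u - v‖^2 = Y at h2 ⊢
      nlinarith [h1, h2, hρ2]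
    have h4 : dist (φ u) (φ v)^2 ≤ 9 * dist u v^2 := by
      rw [hdist2 u v, ← hA, ← hB, dist_eq_norm]
      have := hnorm2 u v
      have hε' : (ε * (Real.sqrt A - Real.sqrt B))^2 = (Real.sqrt A - Real.sqrt B)^2 := by
        rw [mul_pow, hε2, one_mul]
      rw [hε']
      nlinarith [h3, hnorm2 u v, sq_nonneg (u 0 - v 0), sq_nonneg (u 1 - v 1)]
    have hd1 : (0:ℝ) ≤ dist (φ u) (φ v) := dist_nonneg
    have hd2 : (0:ℝ) ≤ dist u v := dist_nonneg
    have : dist (φ u) (φ v) ≤ 3 * dist u v := by nlinarith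
    simpa using this
  -- covering
  have hcover : {z : E3 | dist z x = ρ ∧ ρ^2 ≤ 3 * (z i - x i)^2 ∧ 0 ≤ ε * (z i - x i)}
      ⊆ φ '' Dom := by
    rintro z ⟨hz1, hz2, hz3⟩
    have hsum : ∑ m : Fin 3, (z m - x m)^2 = ρ^2 := by
      have h := hz1
      rw [EuclideanSpace.dist_eq] at h
      have h2 := congrArg (· ^ 2) h
      simp only at h2
      rw [Real.sq_sqrt (by positivity)] at h2
      rw [← h2]
      congr 1; ext m
      rw [Real.dist_eq, sq_abs]
    set u : E2 := WithLp.toLp 2 (fun l => z (i.succAbove l) - x (i.succAbove l) : Fin 2 → ℝ) with hudef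
    have hul : ∀ l : Fin 2, u l = z (i.succAbove l) - x (i.succAbove l) := fun l => rfl
    have hnu : ‖u‖^2 = ρ^2 - (z i - x i)^2 := by
      rw [normsq_eq2, Fin.sum_univ_two, hul, hul]
      rw [Fin.sum_univ_succAbove _ i, Fin.sum_univ_two] at hsum
      linarith
    have hDomu : u ∈ Dom := by
      have : 3 * ‖u‖^2 = 3*ρ^2 - 3*(z i - x i)^2 := by rw [hnu]; ring
      simp only [hDom, mem_setOf_eq]
      linarith
    refine ⟨u, hDomu, ?_⟩
    ext m
    rcases eq_or_ne m i with rfl | hm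
    · rw [hφi u, hnu]
      have hsq : ρ^2 - (ρ^2 - (z m - x m)^2) = (z m - x m)^2 := by ring
      rw [hsq, Real.sqrt_sq_eq_abs]
      rcases hε with h | h
      · rw [h]; rw [h, one_mul] at hz3
        rw [abs_of_nonneg hz3]; ring
      · rw [h]; rw [h] at hz3
        have : z m - x m ≤ 0 := by linarith
        rw [abs_of_nonpos this]; ring
    · obtain ⟨l, rfl⟩ := Fin.exists_succAbove_eq hm
      rw [hφσ u l, hul l]
      ring
  calc μH[2] {z : E3 | dist z x = ρ ∧ ρ^2 ≤ 3 * (z i - x i)^2 ∧ 0 ≤ ε * (z i - x i)}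
      ≤ μH[2] (φ '' Dom) := measure_mono hcover
    _ ≤ (3:ℝ≥0)^(2:ℝ) * μH[2] Dom := hlip.hausdorffMeasure_image_le (by norm_num)
    _ ≤ (3:ℝ≥0)^(2:ℝ) * ENNReal.ofReal (16 * ρ^2) := by
        gcongr
        exact dom_measure_le hρ
    _ = ENNReal.ofReal (144 * ρ^2) := by
        rw [ennreal_coe_rpow_two]
        rw [show ((3:ℝ≥0):ℝ≥0∞) * (3:ℝ≥0) = ENNReal.ofReal 9 by norm_num,
          ← ENNReal.ofReal_mul (by norm_num)]
        congr 1; ring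

lemma sphere_measure_le (x : E3) {ρ : ℝ} (hρ : 0 < ρ) :
    μH[2] (sphere x ρ) ≤ ENNReal.ofReal (864 * ρ^2) := by
  classical
  set cap : Fin 3 → ℝ → Set E3 := fun i ε =>
    {z : E3 | dist z x = ρ ∧ ρ^2 ≤ 3 * (z i - x i)^2 ∧ 0 ≤ ε * (z i - x i)} with hcap
  have hcover : sphere x ρ ⊆ ⋃ i : Fin 3, (cap i 1 ∪ cap i (-1)) := by
    intro z hz
    have hzd : dist z x = ρ := mem_sphere.1 hz
    have hsum : ∑ m : Fin 3, (z m - x m)^2 = ρ^2 := by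
      rw [EuclideanSpace.dist_eq] at hzd
      have h2 := congrArg (· ^ 2) hzd
      simp only at h2
      rw [Real.sq_sqrt (by positivity)] at h2
      rw [← h2]
      congr 1; ext m
      rw [Real.dist_eq, sq_abs]
    have hex : ∃ i : Fin 3, ρ^2 ≤ 3 * (z i - x i)^2 := by
      by_contra hcon
      push_neg at hcon
      have hlt : ∑ m : Fin 3, (z m - x m)^2 < ∑ _m : Fin 3, ρ^2/3 := by
        apply Finset.sum_lt_sum_of_nonempty (by simp)
        intro m _
        have := hcon m
        linarith
      rw [hsum] at hlt
      simp only [Finset.sum_const, Finset.card_univ, Fintype.card_fin, nsmul_eq_mul] at hlt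
      linarith
    obtain ⟨i, hi⟩ := hex
    apply mem_iUnion.2
    refine ⟨i, ?_⟩
    rcases le_or_gt 0 (z i - x i) with h | h
    · exact Or.inl ⟨hzd, hi, by linarith⟩
    · exact Or.inr ⟨hzd, hi, by linarith⟩
  calc μH[2] (sphere x ρ) ≤ μH[2] (⋃ i : Fin 3, (cap i 1 ∪ cap i (-1))) := measure_mono hcover
    _ ≤ ∑ i : Fin 3, μH[2] (cap i 1 ∪ cap i (-1)) := measure_iUnion_fintype_le _ _
    _ ≤ ∑ _i : Fin 3, ENNReal.ofReal (288 * ρ^2) := by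
        apply Finset.sum_le_sum
        intro i _
        calc μH[2] (cap i 1 ∪ cap i (-1)) ≤ μH[2] (cap i 1) + μH[2] (cap i (-1)) :=
              measure_union_le _ _
          _ ≤ ENNReal.ofReal (144 * ρ^2) + ENNReal.ofReal (144 * ρ^2) := by
              gcongr <;> exact cap_measure_le x hρ i _ (by norm_num)
          _ = ENNReal.ofReal (288 * ρ^2) := by
              rw [← ENNReal.ofReal_add (by positivity) (by positivity)]; congr 1; ring
    _ = ENNReal.ofReal (864 * ρ^2) := by
        rw [Finset.sum_const, Finset.card_univ, Fintype.card_fin]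
        rw [show (3:ℕ) • ENNReal.ofReal (288 * ρ^2) = ENNReal.ofReal (288*ρ^2) +
          ENNReal.ofReal (288*ρ^2) + ENNReal.ofReal (288*ρ^2) by
            rw [show (3:ℕ) = 1+1+1 by norm_num, add_smul, add_smul, one_smul]]
        rw [← ENNReal.ofReal_add (by positivity) (by positivity),
          ← ENNReal.ofReal_add (by positivity) (by positivity)]
        congr 1; ring


lemma interior_closure_subset {Ω : Set E3} (hopen : IsOpen Ω) (hconv : Convex ℝ Ω) :
    interior (closure Ω) ⊆ Ω := by
  intro y hy
  rcases Ω.eq_empty_or_nonempty with rfl | ⟨x, hx⟩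
  · simp at hy
  by_cases hxy : y = x
  · rwa [hxy]
  obtain ⟨ε, hε, hball⟩ := Metric.mem_nhds_iff.1 (mem_interior_iff_mem_nhds.1 hy)
  have hn0 : 0 < ‖y - x‖ := by
    rw [norm_sub_pos_iff]; exact hxy
  set n := ‖y - x‖ with hn
  set δ := ε/(2*n) with hδdef
  have hδ : 0 < δ := by positivity
  set z := y + δ • (y - x) with hz
  have hzball : z ∈ Metric.ball y ε := by
    rw [hz, mem_ball_iff_norm]
    have : y + δ • (y - x) - y = δ • (y - x) := by abel
    rw [this, norm_smul, Real.norm_eq_abs, abs_of_pos hδ, hδdef, ← hn]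
    rw [div_mul_eq_mul_div, mul_comm]
    rw [div_lt_iff₀ (by positivity)]
    nlinarith
  have hzcl : z ∈ closure Ω := hball hzball
  have hab : δ/(1+δ) + 1/(1+δ) = 1 := by field_simp; ring
  have hcomb : (δ/(1+δ)) • x + (1/(1+δ)) • z = y := by
    rw [hz]
    have h1δ : (1:ℝ)+δ ≠ 0 := by positivity
    match_scalars <;> field_simp <;> ring
  have hmem := hconv.combo_interior_closure_mem_interior
    (x := x) (y := z) (by rwa [hopen.interior_eq]) hzcl
    (by positivity) (by positivity) hab
  rw [hcomb, hopen.interior_eq] at hmem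
  exact hmem

lemma boundary_area {Ω : Set E3} (hopen : IsOpen Ω) (hconv : Convex ℝ Ω)
    {x : E3} (hx : x ∈ Ω) {r : ℝ} (hr : 0 < r) :
    μH[2] (frontier Ω ∩ Metric.closedBall x r) ≤ ENNReal.ofReal (3456 * r^2) := by
  set K := closure Ω ∩ Metric.closedBall x r with hK
  have hKconv : Convex ℝ K := hconv.closure.inter (convex_closedBall x r)
  have hKcl : IsClosed K := isClosed_closure.inter Metric.isClosed_closedBall
  have hxK : x ∈ K := ⟨subset_closure hx, Metric.mem_closedBall_self hr.le⟩
  have hKb : K ⊆ Metric.closedBall x r := inter_subset_right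
  choose P hPmem hPvar using fun u => exists_proj_point hKconv hKcl ⟨x, hxK⟩ u
  have hsub : frontier Ω ∩ Metric.closedBall x r ⊆ frontier K := by
    rintro y ⟨hyf, hyb⟩
    rw [hKcl.frontier_eq]
    refine ⟨⟨frontier_subset_closure hyf, hyb⟩, ?_⟩
    intro hyint
    have h1 : y ∈ interior (closure Ω) :=
      interior_mono inter_subset_left hyint
    have h2 : y ∈ Ω := interior_closure_subset hopen hconv h1
    rw [hopen.frontier_eq] at hyf
    exact hyf.2 h2
  have hfr := frontier_subset_proj_image hr hxK hKb hKcl hPmem hPvar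
  have hPlip : LipschitzWith 1 P := by
    apply LipschitzWith.of_dist_le_mul
    intro u v
    rw [NNReal.coe_one, one_mul]
    exact proj_point_dist_le (hPmem u) (hPmem v) (hPvar u) (hPvar v)
  calc μH[2] (frontier Ω ∩ Metric.closedBall x r) ≤ μH[2] (P '' (sphere x (2*r))) :=
        measure_mono (hsub.trans hfr)
    _ ≤ (1:ℝ≥0)^(2:ℝ) * μH[2] (sphere x (2*r)) :=
        hPlip.hausdorffMeasure_image_le (by norm_num) _
    _ ≤ μH[2] (sphere x (2*r)) := by simp
    _ ≤ ENNReal.ofReal (864 * (2*r)^2) := sphere_measure_le x (by linarith)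
    _ = ENNReal.ofReal (3456 * r^2) := by congr 1; ring

/-- For a bounded strictly convex `C²` domain `Ω ⊂ ℝ³` whose boundary
has positive Gaussian curvature (encoded by uniform interior and exterior tangent
balls at every boundary point), there is `C > 0`, depending only on `Ω`, such that
for every `x ∈ Ω`: `∫_{∂Ω} |x-y|⁻² dA(y) ≤ C(|ln d(x,∂Ω)| + 1)`, where `dA` is the
two-dimensional Hausdorff (surface) measure on `∂Ω`. -/
theorem boundary_inverse_square_integral_log_bound
    (Ω : Set (EuclideanSpace ℝ (Fin 3)))
    (hopen : IsOpen Ω) (hbdd : Bornology.IsBounded Ω) (hconv : StrictConvex ℝ Ω)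
    (hne : Ω.Nonempty)
    (R₂ R₃ : ℝ) (hR₂ : 0 < R₂) (hR₂₃ : R₂ ≤ R₃)
    (hballs : ∀ p ∈ frontier Ω, ∃ ci co : EuclideanSpace ℝ (Fin 3),
      Metric.closedBall ci R₂ ⊆ closure Ω ∧ closure Ω ⊆ Metric.closedBall co R₃ ∧
      dist p ci = R₂ ∧ dist p co = R₃) :
    ∃ C > 0, ∀ x ∈ Ω,
      ∫⁻ y in frontier Ω, ENNReal.ofReal (1 / dist x y ^ 2) ∂(μH[2]) ≤
        ENNReal.ofReal (C * (|Real.log (Metric.infDist x (frontier Ω))| + 1)) := by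
  classical
  have hcvx : Convex ℝ Ω := hconv.convex
  set D : ℝ := Metric.diam (closure Ω) + 1 with hD
  have hD0 : 0 < D := by
    have := Metric.diam_nonneg (s := closure Ω)
    linarith
  refine ⟨13824 * (2 * |Real.log D| + 3), by positivity, ?_⟩
  intro x hx
  set F := frontier Ω with hF
  rcases F.eq_empty_or_nonempty with hFe | hFne
  · rw [hFe]
    simp
  set d := Metric.infDist x F with hd
  have hxnF : x ∉ F := by
    rw [hF, hopen.frontier_eq]
    intro h
    exact h.2 hx
  have hd0 : 0 < d := (isClosed_frontier.notMem_iff_infDist_pos hFne).1 hxnF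
  have hdist_le : ∀ y ∈ F, dist x y ≤ D := by
    intro y hy
    have h1 : dist x y ≤ Metric.diam (closure Ω) :=
      Metric.dist_le_diam_of_mem hbdd.closure (subset_closure hx) (frontier_subset_closure hy)
    linarith
  have hdist_ge : ∀ y ∈ F, d ≤ dist x y := fun y hy => Metric.infDist_le_dist_of_mem hy
  have hdD : d ≤ D := by
    obtain ⟨y, hy⟩ := hFne
    exact le_trans (hdist_ge y hy) (hdist_le y hy)
  -- the number of annuli
  set N : ℕ := ⌈Real.logb 2 (D/d)⌉₊ with hN
  have hDd1 : 1 ≤ D / d := (one_le_div hd0).2 hdD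
  have hlogb0 : 0 ≤ Real.logb 2 (D/d) := Real.logb_nonneg one_lt_two hDd1
  have h2N : D / d ≤ 2^N := by
    have h1 : (2:ℝ) ^ (Real.logb 2 (D/d)) = D/d :=
      Real.rpow_logb two_pos (by norm_num) (by positivity)
    have h2 : (2:ℝ) ^ (Real.logb 2 (D/d)) ≤ (2:ℝ) ^ ((N:ℝ)) := by
      apply Real.rpow_le_rpow_of_exponent_le one_le_two (Nat.le_ceil _)
    rw [h1] at h2
    rwa [Real.rpow_natCast] at h2
  have hNk : ∀ k : ℕ, N + 1 ≤ k → D / 2^k < d := by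
    intro k hk
    have h1 : (2:ℝ)^(N+1) ≤ (2:ℝ)^k := by
      apply pow_le_pow_right₀ one_le_two hk
    have h2 : (2:ℝ)^(N+1) = 2 * 2^N := by ring
    have h3 : 2 * (D/d) ≤ (2:ℝ)^k := by linarith [h1, h2, h2N]
    have h4 : (0:ℝ) < (2:ℝ)^k := by positivity
    rw [div_lt_iff₀ h4]
    have h5 := mul_le_mul_of_nonneg_left h3 hd0.le
    have h6 : d * (2*(D/d)) = 2*D := by field_simp
    nlinarith [h5, h6, hD0]
  -- annuli
  set A : ℕ → Set E3 := fun k => F ∩ {y | D/2^(k+1) < dist x y ∧ dist x y ≤ D/2^k} with hA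
  have hAmeas : ∀ k, MeasurableSet (A k) := by
    intro k
    apply (isClosed_frontier.measurableSet).inter
    have hmd : Measurable fun y : E3 => dist x y := (continuous_const.dist continuous_id).measurable
    exact hmd measurableSet_Ioc
  have hcover : F ⊆ ⋃ k, A k := by
    intro y hy
    have hyd : d ≤ dist x y := hdist_ge y hy
    have hyD : dist x y ≤ D := hdist_le y hy
    have hQex : ∃ k : ℕ, D/2^(k+1) < dist x y := by
      refine ⟨N+1, ?_⟩
      calc D/2^(N+1+1) ≤ D/2^(N+1) := by
            apply div_le_div_of_nonneg_left hD0.le (by positivity)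
            apply pow_le_pow_right₀ one_le_two (by omega)
        _ < d := hNk (N+1) le_rfl
        _ ≤ dist x y := hyd
    have hq := Nat.find_spec hQex
    have hupper : dist x y ≤ D / 2 ^ (Nat.find hQex) := by
      rcases Nat.eq_zero_or_pos (Nat.find hQex) with h0 | hpos
      · rw [h0]
        simpa using hyD
      · have hnot := Nat.find_min hQex (Nat.sub_lt hpos one_pos)
        push_neg at hnot
        have heq : Nat.find hQex - 1 + 1 = Nat.find hQex := Nat.succ_pred_eq_of_pos hpos
        rwa [heq] at hnot
    exact mem_iUnion.2 ⟨Nat.find hQex, hy, hq, hupper⟩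
  -- the pieces are empty for large k
  have hzero : ∀ k, N + 1 ≤ k → A k = ∅ := by
    intro k hk
    rw [eq_empty_iff_forall_notMem]
    rintro y ⟨hyF, -, hyle⟩
    have := hNk k hk
    have := hdist_ge y hyF
    linarith
  -- bound on each piece
  have hpiece : ∀ k : ℕ, ∫⁻ y in A k, ENNReal.ofReal (1 / dist x y ^ 2) ∂(μH[2]) ≤
      ENNReal.ofReal 13824 := by
    intro k
    rcases le_or_gt (N+1) k with hk | hk
    · rw [hzero k hk]
      simp
    have hrk : (0:ℝ) < D/2^k := by positivity
    have hrk1 : (0:ℝ) < D/2^(k+1) := by positivity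
    have hfb : ∀ y ∈ A k, ENNReal.ofReal (1 / dist x y ^ 2) ≤
        ENNReal.ofReal ((2^(k+1)/D)^2) := by
      rintro y ⟨-, hylt, -⟩
      apply ENNReal.ofReal_le_ofReal
      have h2 : (D/2^(k+1))^2 ≤ dist x y ^2 := by nlinarith [hrk1, hylt.le]
      calc 1/dist x y^2 ≤ 1/(D/2^(k+1))^2 := by
            apply one_div_le_one_div_of_le (by positivity) h2
        _ = (2^(k+1)/D)^2 := by rw [← one_div_pow, one_div_div]
    calc ∫⁻ y in A k, ENNReal.ofReal (1 / dist x y ^ 2) ∂(μH[2])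
        ≤ ∫⁻ _y in A k, ENNReal.ofReal ((2^(k+1)/D)^2) ∂(μH[2]) :=
          setLIntegral_mono' (hAmeas k) hfb
      _ = ENNReal.ofReal ((2^(k+1)/D)^2) * μH[2] (A k) := setLIntegral_const _ _
      _ ≤ ENNReal.ofReal ((2^(k+1)/D)^2) * ENNReal.ofReal (3456 * (D/2^k)^2) := by
          gcongr
          refine le_trans (measure_mono ?_) (boundary_area hopen hcvx hx hrk)
          rintro y ⟨hyF, -, hyle⟩
          exact ⟨hyF, by rw [mem_closedBall, dist_comm]; exact hyle⟩
      _ = ENNReal.ofReal 13824 := by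
          rw [← ENNReal.ofReal_mul (by positivity)]
          congr 1
          field_simp
          ring
  -- put everything together
  calc ∫⁻ y in F, ENNReal.ofReal (1 / dist x y ^ 2) ∂(μH[2])
      ≤ ∫⁻ y in ⋃ k, A k, ENNReal.ofReal (1 / dist x y ^ 2) ∂(μH[2]) :=
        lintegral_mono' (Measure.restrict_mono hcover le_rfl) le_rfl
    _ ≤ ∑' k, ∫⁻ y in A k, ENNReal.ofReal (1 / dist x y ^ 2) ∂(μH[2]) :=
        lintegral_iUnion_le _ _
    _ = ∑ k ∈ Finset.range (N+1), ∫⁻ y in A k, ENNReal.ofReal (1 / dist x y ^ 2) ∂(μH[2]) := by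
        apply tsum_eq_sum
        intro k hk
        have hk' : N + 1 ≤ k := by
          by_contra hcon
          exact hk (Finset.mem_range.2 (by omega))
        rw [hzero k hk']
        simp
    _ ≤ ∑ _k ∈ Finset.range (N+1), ENNReal.ofReal 13824 :=
        Finset.sum_le_sum (fun k _ => hpiece k)
    _ = ((N+1 : ℕ) : ℝ≥0∞) * ENNReal.ofReal 13824 := by
        rw [Finset.sum_const, Finset.card_range, nsmul_eq_mul]
    _ ≤ ENNReal.ofReal ((13824 * (2 * |Real.log D| + 3)) * (|Real.log d| + 1)) := by
        rw [← ENNReal.ofReal_natCast (N+1), ← ENNReal.ofReal_mul (by positivity)]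
        apply ENNReal.ofReal_le_ofReal
        -- the key real arithmetic
        set L := Real.logb 2 (D/d) with hLdef
        have hceil : (N:ℝ) < L + 1 := Nat.ceil_lt_add_one hlogb0
        have hlog2 : (0.6931471803:ℝ) < Real.log 2 := Real.log_two_gt_d9
        have hlogb : L * Real.log 2 = Real.log D - Real.log d := by
          rw [hLdef, Real.logb, Real.log_div hD0.ne' hd0.ne']
          field_simp
        have habs : Real.log D - Real.log d ≤ |Real.log D| + |Real.log d| := by
          have := le_abs_self (Real.log D)
          have := neg_abs_le (Real.log d)
          linarith
        have habsD : (0:ℝ) ≤ |Real.log D| := abs_nonneg _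
        have habsd : (0:ℝ) ≤ |Real.log d| := abs_nonneg _
        have hLle : L * Real.log 2 ≤ |Real.log D| + |Real.log d| := by linarith
        have hL2 : L ≤ 2 * (|Real.log D| + |Real.log d|) := by
          nlinarith [hlogb0, hlog2, hLle]
        push_cast
        nlinarith [mul_nonneg habsD habsd, hceil, hL2, habsD, habsd]

end
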